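/- Let notation be as in the context, with p a prime, (M,φ) a-small and M p-adically complete. Define ρ : M → (families ℕ → M) by ρ(x)_0 := 0 and ρ(x)_n := Φ_{1,n−1}(x) = ∏_{i=1}^{n-1}(φ − i·a)(x) for n ≥ 1 (so ρ(x)_1 = x). Then: (i) ρ(x) ∈ C^1 for every x ∈ M, and ρ : M → C^1 is an injective R-linear map; (ii) the kernel of δ^1 : C^1 → C^2 equals the image ρ(M); (iii) ρ(φ(x)) = δ^0(x) for all x ∈ M. Consequently ρ induces an isomorphism of R-modules M/φ(M) ≅ ker(δ^1)/im(δ^0), i.e. the first cohomology of the complex (C^•, δ^•) is M/φ(M). -/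

import Mathlib

/-- `Phi φ a c r = (φ - c·a) ∘ (φ - (c+1)·a) ∘ ⋯ ∘ (φ - (c+r-1)·a)`, a composite of pairwise
commuting endomorphisms (`Phi φ a c 0 = id`). -/
def Phi {R M : Type*} [CommRing R] [AddCommGroup M] [Module R M]
    (φ : Module.End R M) (a : R) (c r : ℕ) : Module.End R M :=
  ((List.range r).map (fun h => φ - (((c + h : ℕ) : R) * a) • 1)).prod

/-- The coefficientwise Čech–Alexander differential `δ^s` attached to the stratification
`ε = (1+aX₁)^{φ/a}`: for a family `m : ℕ^s → M` and `J = (j₁,…,j_{s+1})`,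
`δ^s(m)_J = Σ_{(r,u), r+|u|=j₁} (−1)^{|u|} (j₁!/(r!·∏ uᵢ!)) Φ_{c(u,J),r}(m_{u+J'})
  + Σ_{l} (−1)^l [j_l = 0] m_{J minus l-th entry}`,
where `J' = (j₂,…,j_{s+1})` and `c(u,J) = Σᵢ (uᵢ + j_{i+1})`. -/
def delta {R M : Type*} [CommRing R] [AddCommGroup M] [Module R M]
    (φ : Module.End R M) (a : R) {s : ℕ} (m : (Fin s → ℕ) → M) :
    (Fin (s + 1) → ℕ) → M :=
  fun J =>
    (∑ v ∈ Finset.Nat.antidiagonalTuple (s + 1) (J 0),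
        ((-1 : ℤ) ^ (∑ i : Fin s, v i.succ) * (Nat.multinomial Finset.univ v : ℤ)) •
          (Phi φ a (∑ i : Fin s, (v i.succ + J i.succ)) (v 0))
            (m (fun i => v i.succ + J i.succ)))
      + ∑ l : Fin (s + 1),
          ((-1 : ℤ) ^ ((l : ℕ) + 1)) •
            (if J l = 0 then m (fun i => J (l.succAbove i)) else 0)

/-- `(M, φ)` is `a`-small: for every `k` there is `N` such that
`Φ_n = ∏_{i=0}^{n-1}(φ - i·a)` maps `M` into `p^k·M` for all `n ≥ N`. -/
def IsSmall (p : ℕ) {R M : Type*} [CommRing R] [AddCommGroup M] [Module R M]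
    (φ : Module.End R M) (a : R) : Prop :=
  ∀ k : ℕ, ∃ N : ℕ, ∀ n ≥ N, ∀ x : M, ∃ y : M, Phi φ a 0 n x = (p ^ k : ℕ) • y

/-- Membership in `C^s`: a family `m` of elements of `M` lies in `p^k·M` at all but finitely
many indices, for every `k`. -/
def InC (p : ℕ) {M : Type*} [AddCommGroup M] {ι : Type*} (m : ι → M) : Prop :=
  ∀ k : ℕ, {I : ι | ¬ ∃ y : M, m I = (p ^ k : ℕ) • y}.Finite

namespace Stmt8
variable {R M : Type*} [CommRing R] [AddCommGroup M] [Module R M] (φ : Module.End R M) (a : R)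

lemma phi_zero (c : ℕ) : Phi φ a c 0 = 1 := rfl

lemma phi_succ (c r : ℕ) :
    Phi φ a c (r + 1) = Phi φ a c r * (φ - (((c + r : ℕ) : R) * a) • 1) := by
  unfold Phi
  rw [List.range_succ, List.map_append, List.prod_append, List.map_singleton,
    List.prod_singleton]

lemma factor_comm (b b' : R) :
    Commute (φ - b • 1) (φ - b' • 1) := by
  have h1 : Commute (b • (1 : Module.End R M)) φ := by
    simpa using (Commute.one_left φ).smul_left b
  have h2 : Commute (b' • (1 : Module.End R M)) φ := by
    simpa using (Commute.one_left φ).smul_left b'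
  have h3 : Commute (b • (1 : Module.End R M)) (b' • (1 : Module.End R M)) := by
    show (b • (1 : Module.End R M)) * (b' • 1) = (b' • 1) * (b • 1)
    rw [smul_mul_smul_comm, smul_mul_smul_comm, mul_comm b b']
  exact ((Commute.refl φ).sub_right h2.symm).sub_left (h1.sub_right h3)

lemma factor_phi_comm (b : R) (c r : ℕ) :
    Commute (φ - b • 1) (Phi φ a c r) := by
  apply Commute.list_prod_right
  intro x hx
  simp only [List.mem_map, List.mem_range] at hx
  obtain ⟨h, -, rfl⟩ := hx
  exact factor_comm φ _ _

lemma phi_comm (c r c' r' : ℕ) :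
    Commute (Phi φ a c r) (Phi φ a c' r') := by
  apply Commute.list_prod_left
  intro x hx
  simp only [List.mem_map, List.mem_range] at hx
  obtain ⟨h, -, rfl⟩ := hx
  exact factor_phi_comm φ a _ _ _

lemma phi_add (c r r' : ℕ) :
    Phi φ a c (r + r') = Phi φ a c r * Phi φ a (c + r) r' := by
  induction r' with
  | zero => simp [phi_zero]
  | succ n ih =>
      have h : c + (r + n) = c + r + n := by omega
      rw [← Nat.add_assoc, phi_succ, ih, phi_succ, mul_assoc, h]

end Stmt8

namespace Stmt8
variable {R M : Type*} [CommRing R] [AddCommGroup M] [Module R M] (φ : Module.End R M) (a : R)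

lemma delta0_apply (x : M) (J : Fin 1 → ℕ) :
    delta φ a (fun _ : Fin 0 → ℕ => x) J
      = Phi φ a 0 (J 0) x - (if J 0 = 0 then x else 0) := by
  unfold delta
  rw [Finset.Nat.antidiagonalTuple_one, Finset.sum_singleton]
  rw [Fin.sum_univ_one]
  have hu : (Finset.univ : Finset (Fin 1)) = {0} := rfl
  simp only [hu, Fin.sum_univ_zero, pow_zero,
    Nat.multinomial_singleton, Nat.cast_one, mul_one, one_smul, Fin.val_zero, zero_add,
    pow_one, neg_smul, one_smul, Matrix.cons_val_zero]
  abel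

lemma delta1_apply (m : (Fin 1 → ℕ) → M) (J : Fin 2 → ℕ) :
    delta φ a m J
      = (∑ u ∈ Finset.range (J 0 + 1),
          ((-1 : ℤ) ^ u * ((J 0 - u + u).choose (J 0 - u) : ℤ)) •
            Phi φ a (u + J 1) (J 0 - u) (m fun _ => u + J 1))
        - (if J 0 = 0 then m (fun _ => J 1) else 0)
        + (if J 1 = 0 then m (fun _ => J 0) else 0) := by
  unfold delta
  rw [Finset.Nat.antidiagonalTuple_two, Finset.sum_map]
  rw [← Finset.HasAntidiagonal.map_swap_antidiagonal, Finset.sum_map]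
  rw [Finset.Nat.sum_antidiagonal_eq_sum_range_succ_mk]
  have hsucc1 : ∀ i : Fin 1, (i.succ : Fin 2) = 1 := by
    intro i; fin_cases i; rfl
  have hu2 : (Finset.univ : Finset (Fin 2)) = insert 0 {1} := rfl
  have h01 : (0 : Fin 2) ∉ ({1} : Finset (Fin 2)) := by decide
  have hc0 : ∀ x y : ℕ, (Fin.cons x (Fin.cons y finZeroElim) : Fin 2 → ℕ) 0 = x :=
    fun x y => rfl
  have hc1 : ∀ x y : ℕ, (Fin.cons x (Fin.cons y finZeroElim) : Fin 2 → ℕ) 1 = y :=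
    fun x y => rfl
  have hsa0 : (fun i : Fin 1 => J ((0 : Fin 2).succAbove i)) = fun _ => J 1 := by
    funext i; fin_cases i; rfl
  have hsa1 : (fun i : Fin 1 => J ((1 : Fin 2).succAbove i)) = fun _ => J 0 := by
    funext i; fin_cases i; rfl
  rw [Fin.sum_univ_two, hsa0, hsa1]
  simp only [Function.Embedding.coeFn_mk, Equiv.coe_toEmbedding, piFinTwoEquiv_symm_apply,
    Prod.swap_prod_mk, Nat.succ_eq_add_one, Fin.sum_univ_one, hsucc1, hc0, hc1,
    hu2, Nat.multinomial_insert h01, Nat.multinomial_singleton, mul_one,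
    Finset.sum_singleton, Fin.val_zero, Fin.val_one, zero_add, pow_one, neg_smul,
    one_smul, neg_neg, neg_one_sq]
  abel

end Stmt8

namespace Stmt8
variable {R M : Type*} [CommRing R] [AddCommGroup M] [Module R M] (φ : Module.End R M) (a : R)

lemma phi_zero_one : Phi φ a 0 1 = φ := by
  rw [phi_succ, phi_zero]
  simp

/-- composition/telescoping: `Phi (c+r) r' ∘ Phi c r = Phi c (r+r')` -/
lemma phi_tele (c r r' : ℕ) (x : M) :
    Phi φ a (c + r) r' (Phi φ a c r x) = Phi φ a c (r + r') x := by
  rw [phi_add]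
  rw [show Phi φ a c r * Phi φ a (c + r) r' = Phi φ a (c + r) r' * Phi φ a c r from
    (phi_comm φ a c r (c + r) r')]
  rfl

lemma phi_one_succ (n : ℕ) (x : M) :
    Phi φ a 1 (n + 1) x = Phi φ a 0 (n + 1) x - (((n + 1 : ℕ) : R) * a) • Phi φ a 1 n x := by
  have e : 1 + n = n + 1 := by omega
  have h1 : Phi φ a 1 (n + 1) = Phi φ a 1 n * (φ - (((n + 1 : ℕ) : R) * a) • 1) := by
    rw [phi_succ, e]
  have h2 : Phi φ a 0 (n + 1) = Phi φ a 1 n * φ := by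
    have h3 : Phi φ a 0 (1 + n) = Phi φ a 0 1 * Phi φ a 1 n := phi_add φ a 0 1 n
    rw [e] at h3
    rw [h3, phi_zero_one]
    have h4 := (phi_comm φ a 1 n 0 1).eq
    rw [phi_zero_one] at h4
    exact h4.symm
  have h5 := congrArg (fun f : Module.End R M => f x) h1
  simp only [Module.End.mul_apply, LinearMap.sub_apply, LinearMap.smul_apply,
    Module.End.one_apply, map_sub, map_smul] at h5 ⊢
  rw [h5, h2]
  simp [Module.End.mul_apply]

/-- `p ^ k ∣ (k * p)!` -/
lemma pow_dvd_fact (p k : ℕ) (hp : 1 ≤ p) : p ^ k ∣ (k * p).factorial := by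
  induction k with
  | zero => simp
  | succ k ih =>
      have h1 : (k + 1) * p = k * p + p := by ring
      have hp1 : k * p + p = (k * p + p - 1) + 1 := by omega
      rw [h1, hp1, Nat.factorial_succ, pow_succ]
      have h2 : p ^ k ∣ (k * p + p - 1).factorial :=
        ih.trans (Nat.factorial_dvd_factorial (by omega))
      have h3 : p ∣ k * p + p - 1 + 1 := by
        rw [← hp1]; exact ⟨k + 1, by ring⟩
      have h4 : p ^ k * p ∣ (k * p + p - 1).factorial * (k * p + p - 1 + 1) :=
        mul_dvd_mul h2 h3
      calc p ^ k * p ∣ (k * p + p - 1).factorial * (k * p + p - 1 + 1) := h4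
        _ = (k * p + p - 1 + 1) * (k * p + p - 1).factorial := by ring

variable (p : ℕ)

lemma small_one (hp : p.Prime)
    (hsmall : ∀ k : ℕ, ∃ N : ℕ, ∀ n ≥ N, ∀ x : M, ∃ y : M, Phi φ a 0 n x = (p ^ k : ℕ) • y)
    (k : ℕ) :
    ∃ N : ℕ, ∀ n ≥ N, ∀ x : M, ∃ y : M, Phi φ a 1 n x = (p ^ k : ℕ) • y := by
  obtain ⟨N₀, hN₀⟩ := hsmall k
  set D : ℕ → ℕ := fun n => ∏ i ∈ Finset.Ico (N₀ + 1) (n + 1), i with hD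
  have hDsucc : ∀ n, N₀ ≤ n → D (n + 1) = D n * (n + 1) := by
    intro n hn
    simp only [hD]
    exact Finset.prod_Ico_succ_top (by omega) _
  have hDne : ∀ n, D n ≠ 0 := by
    intro n
    simp only [hD]
    refine Finset.prod_ne_zero_iff.mpr ?_
    intro i hi
    simp only [Finset.mem_Ico] at hi
    omega
  have hDfact : ∀ n, N₀ ≤ n → N₀.factorial * D n = n.factorial := by
    intro n hn
    induction n, hn using Nat.le_induction with
    | base =>
        simp only [hD, Finset.Ico_self, Finset.prod_empty, mul_one]
    | succ n hn ih =>
        rw [hDsucc n hn, ← mul_assoc, ih, Nat.factorial_succ, mul_comm]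
  have claim : ∀ n, N₀ ≤ n → ∀ x : M, ∃ y z : M,
      Phi φ a 1 n x = (p ^ k : ℕ) • y + (D n) • z := by
    intro n hn
    induction n, hn using Nat.le_induction with
    | base =>
        intro x
        refine ⟨0, Phi φ a 1 N₀ x, ?_⟩
        simp only [hD, Finset.Ico_self, Finset.prod_empty, one_smul, smul_zero, zero_add]
    | succ n hn ih =>
        intro x
        obtain ⟨y, z, hyz⟩ := ih x
        obtain ⟨y₁, hy₁⟩ := hN₀ (n + 1) (by omega) x
        refine ⟨y₁ - (n + 1) • (a • y), -(a • z), ?_⟩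
        rw [phi_one_succ, hy₁, hyz, hDsucc n hn]
        rw [mul_smul, Nat.cast_smul_eq_nsmul]
        rw [smul_add, smul_comm a ((p ^ k : ℕ)) y, smul_comm a (D n) z]
        rw [smul_add, smul_smul ((n+1)) (p ^ k), smul_smul ((n+1)) (D n)]
        rw [mul_comm (n+1) (p ^ k)]
        rw [smul_sub, smul_smul (p ^ k) (n+1)]
        rw [smul_neg, mul_comm (D n) (n + 1)]
        abel
  refine ⟨max N₀ ((k + (N₀.factorial).factorization p) * p), fun n hn x => ?_⟩
  have hn₀ : N₀ ≤ n := le_trans (le_max_left _ _) hn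
  obtain ⟨y, z, hyz⟩ := claim n hn₀ x
  set v := (N₀.factorial).factorization p with hv
  have h1 : p ^ (k + v) ∣ n.factorial :=
    (pow_dvd_fact p (k + v) hp.one_lt.le).trans
      (Nat.factorial_dvd_factorial (le_trans (le_max_right _ _) hn))
  have hfne : n.factorial ≠ 0 := Nat.factorial_ne_zero n
  have h2 : k + v ≤ (n.factorial).factorization p :=
    (Nat.Prime.pow_dvd_iff_le_factorization hp hfne).mp h1
  have h3 : (n.factorial).factorization p = v + (D n).factorization p := by
    rw [← hDfact n hn₀, Nat.factorization_mul (Nat.factorial_ne_zero N₀) (hDne n)]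
    simp [hv]
  have h4 : p ^ k ∣ D n :=
    (Nat.Prime.pow_dvd_iff_le_factorization hp (hDne n)).mpr (by omega)
  obtain ⟨c, hc⟩ := h4
  refine ⟨y + c • z, ?_⟩
  rw [hyz, hc, mul_smul, smul_add]

end Stmt8

namespace Stmt8
variable {R M : Type*} [CommRing R] [AddCommGroup M] [Module R M] (φ : Module.End R M) (a : R)

lemma phi_phi (n : ℕ) (x : M) : Phi φ a 1 n (φ x) = Phi φ a 0 (n + 1) x := by
  have h := phi_tele φ a 0 1 n x
  rw [phi_zero_one] at h
  rw [show (0:ℕ) + 1 = 1 from rfl, show 1 + n = n + 1 from by omega] at h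
  exact h

lemma tele2 (u j : ℕ) (h1 : 1 ≤ u) (hu : u ≤ j) (x : M) :
    Phi φ a u (j - u) (Phi φ a 1 (u - 1) x) = Phi φ a 1 (j - 1) x := by
  have h := phi_tele φ a 1 (u - 1) (j - u) x
  rw [show 1 + (u - 1) = u from by omega, show u - 1 + (j - u) = j - 1 from by omega] at h
  exact h

end Stmt8

/-- with `(M,φ)` `a`-small and `M` `p`-adically complete, the map
`ρ(x)_n = ∏_{i=1}^{n-1}(φ − i·a)(x)` (with `ρ(x)_0 = 0`) is an injective `R`-linear map
`M → C^1` whose image is the kernel of `δ^1`, it satisfies `ρ(φ(x)) = δ^0(x)`, and it induces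
an isomorphism `M/φ(M) ≅ ker(δ^1)/im(δ^0)`: an element `ρ(x)` lies in the image of `δ^0` iff
`x` lies in the image of `φ`. -/
theorem statement8 (p : ℕ) (hp : p.Prime) {R M : Type*} [CommRing R] [AddCommGroup M]
    [Module R M] (φ : Module.End R M) (a : R) (hsmall : IsSmall p φ a)
    [IsAdicComplete (Ideal.span {(p : ℤ)}) M] :
    let ρ : M → (Fin 1 → ℕ) → M := fun x J => if J 0 = 0 then 0 else Phi φ a 1 (J 0 - 1) x
    -- (i) ρ lands in C¹ and is injective and R-linear
    (∀ x : M, InC p (ρ x)) ∧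
      (∀ x y : M, ρ x = ρ y → x = y) ∧
      (∀ x y : M, ρ (x + y) = ρ x + ρ y) ∧
      (∀ (r : R) (x : M), ρ (r • x) = r • ρ x) ∧
      -- (ii) the kernel of δ¹ : C¹ → C² equals the image of ρ
      (∀ m : (Fin 1 → ℕ) → M, (InC p m ∧ delta φ a m = 0) ↔ ∃ x : M, m = ρ x) ∧
      -- (iii) ρ(φ(x)) = δ⁰(x)
      (∀ x : M, ρ (φ x) = delta φ a (fun _ : Fin 0 → ℕ => x)) ∧
      -- consequently, ρ induces an isomorphism M/φ(M) ≅ ker(δ¹)/im(δ⁰)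
      (∀ x : M, (∃ y : M, ρ x = delta φ a (fun _ : Fin 0 → ℕ => y)) ↔ ∃ z : M, x = φ z) := by
  intro ρ
  have hρ : ∀ (x : M) (J : Fin 1 → ℕ),
      ρ x J = if J 0 = 0 then 0 else Phi φ a 1 (J 0 - 1) x := fun _ _ => rfl
  clear_value ρ
  -- (i) InC
  have hInC : ∀ x : M, InC p (ρ x) := by
    intro x k
    obtain ⟨N, hN⟩ := Stmt8.small_one φ a p hp hsmall k
    have hsub : {I : Fin 1 → ℕ | ¬ ∃ y : M, ρ x I = (p ^ k : ℕ) • y} ⊆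
        (fun n : ℕ => (fun _ : Fin 1 => n)) '' (Set.Iic N) := by
      intro J hJ
      simp only [Set.mem_setOf_eq] at hJ
      have hJ0 : J 0 ≤ N := by
        by_contra hc
        push_neg at hc
        apply hJ
        rcases Nat.eq_zero_or_pos (J 0) with h0 | h0
        · exact ⟨0, by rw [hρ, if_pos h0, smul_zero]⟩
        · obtain ⟨y, hy⟩ := hN (J 0 - 1) (by omega) x
          exact ⟨y, by rw [hρ, if_neg (by omega), hy]⟩
      refine ⟨J 0, hJ0, ?_⟩
      funext i
      have hi : i = 0 := Subsingleton.elim i 0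
      rw [hi]
    exact ((Set.finite_Iic N).image _).subset hsub
  -- (iii)
  have h6 : ∀ x : M, ρ (φ x) = delta φ a (fun _ : Fin 0 → ℕ => x) := by
    intro x
    funext J
    rw [Stmt8.delta0_apply, hρ]
    rcases Nat.eq_zero_or_pos (J 0) with h | h
    · simp [h, Stmt8.phi_zero]
    · obtain ⟨n, hn⟩ : ∃ n, J 0 = n + 1 := ⟨J 0 - 1, by omega⟩
      rw [hn, if_neg (Nat.succ_ne_zero n), if_neg (Nat.succ_ne_zero n),
        Nat.add_sub_cancel, sub_zero, Stmt8.phi_phi]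
  -- delta of ρ x vanishes
  have hker : ∀ x : M, delta φ a (ρ x) = 0 := by
    intro x
    funext J
    rw [Pi.zero_apply, Stmt8.delta1_apply]
    rcases Nat.eq_zero_or_pos (J 1) with hn | hn
    · rcases Nat.eq_zero_or_pos (J 0) with hj | hj
      · simp [hρ, hj, hn, Stmt8.phi_zero]
      · have hsum : ∀ u ∈ Finset.range (J 0 + 1),
            ((-1 : ℤ) ^ u * ((J 0 - u + u).choose (J 0 - u) : ℤ)) •
              Phi φ a (u + J 1) (J 0 - u) (ρ x (fun _ => u + J 1))
            = ((-1 : ℤ) ^ u * ((J 0).choose u : ℤ)) • Phi φ a 1 (J 0 - 1) x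
              - (if u = 0 then Phi φ a 1 (J 0 - 1) x else 0) := by
          intro u hu
          simp only [Finset.mem_range] at hu
          have hu' : u ≤ J 0 := by omega
          rcases Nat.eq_zero_or_pos u with h0 | h0
          · subst h0
            rw [hρ]
            simp [hn, hj, Nat.choose_self, Nat.choose_zero_right]
          · rw [hρ, if_neg (by omega), hn]
            rw [show u + 0 = u from by omega]
            rw [Stmt8.tele2 φ a u (J 0) h0 hu' x]
            rw [show J 0 - u + u = J 0 from by omega, Nat.choose_symm hu']
            rw [if_neg (by omega), sub_zero]
        rw [Finset.sum_congr rfl hsum, Finset.sum_sub_distrib, ← Finset.sum_smul]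
        rw [Int.alternating_sum_range_choose_of_ne (by omega : J 0 ≠ 0), zero_smul]
        rw [Finset.sum_ite_eq' (Finset.range (J 0 + 1)) 0
          (fun _ => Phi φ a 1 (J 0 - 1) x)]
        rw [if_pos (Finset.mem_range.mpr (by omega)), hρ, hρ]
        rw [if_neg (by omega), if_pos hn, if_neg (by omega)]
        abel
    · have hsum : ∀ u ∈ Finset.range (J 0 + 1),
          ((-1 : ℤ) ^ u * ((J 0 - u + u).choose (J 0 - u) : ℤ)) •
            Phi φ a (u + J 1) (J 0 - u) (ρ x (fun _ => u + J 1))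
          = ((-1 : ℤ) ^ u * ((J 0).choose u : ℤ)) • Phi φ a 1 (J 0 + J 1 - 1) x := by
        intro u hu
        simp only [Finset.mem_range] at hu
        have hu' : u ≤ J 0 := by omega
        rw [show J 0 - u + u = J 0 from by omega, Nat.choose_symm hu']
        rw [hρ, if_neg (by omega)]
        rw [show J 0 - u = (J 0 + J 1) - (u + J 1) from by omega]
        rw [Stmt8.tele2 φ a (u + J 1) (J 0 + J 1) (by omega) (by omega) x]
      rw [Finset.sum_congr rfl hsum, ← Finset.sum_smul, Int.alternating_sum_range_choose]
      rcases Nat.eq_zero_or_pos (J 0) with hj | hj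
      · rw [if_pos hj, one_smul, if_pos hj, if_neg (by omega), hρ, if_neg (by omega)]
        rw [hj, show 0 + J 1 - 1 = J 1 - 1 from by omega]
        abel
      · rw [if_neg (by omega), zero_smul, if_neg (by omega), if_neg (by omega)]
        abel
  -- main conjunction
  refine ⟨hInC, ?_, ?_, ?_, ?_, h6, ?_⟩
  · -- injective
    intro x y h
    have h1 := congr_fun h (fun _ : Fin 1 => 1)
    rw [hρ, hρ, if_neg one_ne_zero, if_neg one_ne_zero] at h1
    simpa [Stmt8.phi_zero] using h1
  · -- additive
    intro x y
    funext J
    rw [Pi.add_apply, hρ, hρ, hρ]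
    rcases Nat.eq_zero_or_pos (J 0) with h | h
    · simp [h]
    · rw [if_neg (by omega), if_neg (by omega), if_neg (by omega), map_add]
  · -- smul
    intro r x
    funext J
    rw [Pi.smul_apply, hρ, hρ]
    rcases Nat.eq_zero_or_pos (J 0) with h | h
    · simp [h]
    · rw [if_neg (by omega), if_neg (by omega), map_smul]
  · -- (ii)
    intro m
    constructor
    · rintro ⟨hc, hz⟩
      refine ⟨m (fun _ => 1), ?_⟩
      have rel0 : m (fun _ : Fin 1 => 0) = 0 := by
        have h1 := congr_fun hz ![0, 0]
        rw [Stmt8.delta1_apply] at h1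
        simpa [Stmt8.phi_zero] using h1
      have reln : ∀ n : ℕ, m (fun _ : Fin 1 => n + 1)
          = Phi φ a n 1 (m fun _ : Fin 1 => n)
            + (if n = 0 then m (fun _ : Fin 1 => 1) else 0) := by
        intro n
        have h1 := congr_fun hz ![1, n]
        rw [Stmt8.delta1_apply] at h1
        rw [show (![1, n] : Fin 2 → ℕ) 0 = 1 from rfl,
          show (![1, n] : Fin 2 → ℕ) 1 = n from rfl] at h1
        rw [Finset.sum_range_succ, Finset.sum_range_one] at h1
        norm_num [Stmt8.phi_zero] at h1
        rw [show (fun _ : Fin 1 => 1 + n) = (fun _ : Fin 1 => n + 1) from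
          by funext i; rw [Nat.add_comm]] at h1
        apply eq_of_sub_eq_zero
        have h2 : (m fun _ : Fin 1 => n + 1) -
              ((Phi φ a n 1) (m fun _ : Fin 1 => n)
                + if n = 0 then m fun _ : Fin 1 => 1 else 0)
            = -(((Phi φ a n 1) (m fun _ : Fin 1 => n) + -(m fun _ : Fin 1 => n + 1))
                + if n = 0 then m fun _ : Fin 1 => 1 else 0) := by
          abel
        rw [h2, h1, neg_zero]
      have key : ∀ n : ℕ, m (fun _ : Fin 1 => n) = ρ (m fun _ => 1) (fun _ => n) := by
        intro n
        induction n with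
        | zero => rw [rel0, hρ]; simp
        | succ n ih =>
            rcases Nat.eq_zero_or_pos n with h0 | h0
            · subst h0
              norm_num [hρ, Stmt8.phi_zero]
            · rw [reln n, if_neg (by omega), add_zero, ih, hρ, hρ,
                if_neg (by omega), if_neg (by omega)]
              have h5 := Stmt8.tele2 φ a n (n + 1) h0 (by omega) (m fun _ => 1)
              rw [show n + 1 - n = 1 from by omega, show n + 1 - 1 = n from rfl] at h5
              rw [show n + 1 - 1 = n from rfl, h5]
      funext J
      have hJ : J = (fun _ : Fin 1 => J 0) := by
        funext i; rw [Subsingleton.elim i 0]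
      rw [hJ, key (J 0)]
    · rintro ⟨x, rfl⟩
      exact ⟨hInC x, hker x⟩
  · -- consequence
    intro x
    constructor
    · rintro ⟨y, h⟩
      have h1 := congr_fun h (fun _ : Fin 1 => 1)
      rw [hρ, if_neg one_ne_zero, Stmt8.delta0_apply, if_neg one_ne_zero, sub_zero] at h1
      rw [show (1 : ℕ) - 1 = 0 from rfl, Stmt8.phi_zero, Stmt8.phi_zero_one] at h1
      exact ⟨y, by simpa using h1⟩
    · rintro ⟨z, rfl⟩
      exact ⟨z, h6 z⟩
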